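/- Let Γ be a finite alphabet, u a right-infinite word over Γ, and suppose the sequence of prefixes (u[0,n))_n has a cluster point in the profinite completion of Γ⁺ that is idempotent. Then u is recurrent: every finite prefix of u occurs again later in u. Conversely, if u is recurrent, then some cluster point of (u[0,n))_n is idempotent. -/

import Mathlib

/-- `pref u n` is the prefix u[0,n+1) of the right-infinite word u, as an
element of the free semigroup. -/
def pref {Γ : Type*} (u : ℕ → Γ) : ℕ → FreeSemigroup Γ
  | 0 => FreeSemigroup.of (u 0)
  | n + 1 => pref u n * FreeSemigroup.of (u (n + 1))


namespace Stmt18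

variable {α : Type*}

/-- last `K` elements of a list -/
def rt (K : ℕ) (l : List α) : List α := (l.reverse.take K).reverse

lemma length_rt (K : ℕ) (l : List α) : (rt K l).length = min K l.length := by
  simp [rt]

lemma rt_suffix (K : ℕ) (l : List α) : rt K l <:+ l := by
  have h : (rt K l).reverse <+: l.reverse := by
    simpa [rt] using List.take_prefix K l.reverse
  rw [List.reverse_prefix] at h
  exact h

lemma take_append_take (K : ℕ) (a b : List α) :
    (a ++ b).take K = (a.take K ++ b.take K).take K := by
  rw [List.take_append, List.take_append,
    List.take_take, List.take_take, List.length_take]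
  congr 1
  · simp
  · congr 1; omega

lemma rt_append_rt (K : ℕ) (a b : List α) :
    rt K (a ++ b) = rt K (rt K a ++ rt K b) := by
  simp only [rt, List.reverse_append, List.reverse_reverse]
  rw [← take_append_take]

lemma suffix_rt {K : ℕ} {x l : List α} (h : x <:+ l) (hK : x.length ≤ K) :
    x <:+ rt K l := by
  rw [← List.reverse_prefix] at h ⊢
  rw [rt, List.reverse_reverse]
  exact List.prefix_take_iff.mpr ⟨h, by simpa using hK⟩

lemma suffix_append_prefix_infix {a' b' a b : List α}
    (h1 : a' <:+ a) (h2 : b' <+: b) : a' ++ b' <:+: a ++ b := by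
  obtain ⟨s, hs⟩ := h1
  obtain ⟨t, ht⟩ := h2
  exact ⟨s, t, by rw [← hs, ← ht]; simp [List.append_assoc]⟩

lemma infix_split {K : ℕ} {z a b : List α} (h : z <:+: a ++ b) (hK : z.length ≤ K) :
    z <:+: a ∨ z <:+: b ∨ z <:+: rt K a ++ b.take K := by
  obtain ⟨s, t, hst⟩ := h
  have hlen : s.length + z.length + t.length = a.length + b.length := by
    have := congrArg List.length hst
    simp at this
    omega
  by_cases h1 : s.length + z.length ≤ a.length
  · left
    have hp : s ++ z <+: a ++ b := ⟨t, hst⟩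
    have hp2 : s ++ z <+: a :=
      List.prefix_of_prefix_length_le hp (List.prefix_append a b) (by simp; omega)
    exact ((List.suffix_append s z).isInfix).trans hp2.isInfix
  by_cases h2 : a.length ≤ s.length
  · right; left
    have hp : z ++ t <:+ a ++ b := ⟨s, by rw [← hst]; simp [List.append_assoc]⟩
    have hp2 : z ++ t <:+ b :=
      List.suffix_of_suffix_length_le hp (List.suffix_append a b) (by simp; omega)
    exact ((List.prefix_append z t).isInfix).trans hp2.isInfix
  · right; right
    push_neg at h1 h2
    have hdz : a.length - s.length ≤ z.length := by omega
    have hsplitz : (s ++ z.take (a.length - s.length)) ++ (z.drop (a.length - s.length) ++ t)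
        = a ++ b := by
      rw [← hst]; simp only [List.append_assoc]; rw [← List.append_assoc _ _ t,
        ← List.append_assoc, List.take_append_drop, List.append_assoc]
    have hzt : z.take (a.length - s.length) <:+ a := by
      have hp : s ++ z.take (a.length - s.length) <+: a ++ b := ⟨_, hsplitz⟩
      have hp2 : s ++ z.take (a.length - s.length) <+: a :=
        List.prefix_of_prefix_length_le hp (List.prefix_append a b) (by simp; omega)
      exact ⟨s, hp2.eq_of_length (by simp; omega)⟩
    have hzd : z.drop (a.length - s.length) <+: b := by
      have hp : z.drop (a.length - s.length) ++ t <:+ a ++ b :=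
        ⟨_, hsplitz⟩
      have hp2 : z.drop (a.length - s.length) ++ t <:+ b :=
        List.suffix_of_suffix_length_le hp (List.suffix_append a b) (by simp; omega)
      exact ⟨t, hp2.eq_of_length (by simp; omega)⟩
    have h3 : z.take (a.length - s.length) <:+ rt K a := suffix_rt hzt (by simp; omega)
    have h4 : z.drop (a.length - s.length) <+: b.take K :=
      List.prefix_take_iff.mpr ⟨hzd, by simp; omega⟩
    have := suffix_append_prefix_infix h3 h4
    rwa [List.take_append_drop] at this

end Stmt18

namespace Stmt18

/-- the word underlying an element of the free semigroup -/
def wlist {α : Type*} (w : FreeSemigroup α) : List α := w.head :: w.tail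

variable {α : Type*}

lemma wlist_mul (a b : FreeSemigroup α) : wlist (a * b) = wlist a ++ wlist b := rfl

lemma wlist_pref (u : ℕ → α) : ∀ n, wlist (pref u n) = (List.range (n + 1)).map u
  | 0 => rfl
  | n + 1 => by
    show wlist (pref u n * FreeSemigroup.of (u (n + 1))) = _
    rw [wlist_mul, wlist_pref u n]
    simp [List.range_succ, wlist, FreeSemigroup.of]

/-- finite abstraction of a word: prefix of length L, factors of length L,
suffix of length L -/
def phiD (L : ℕ) (w : FreeSemigroup α) : List α × Set (List α) × List α :=
  ((wlist w).take L, {z | z.length = L ∧ z <:+: wlist w}, rt L (wlist w))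

/-- multiplication at the level of abstractions -/
def mD (L : ℕ) (d d' : List α × Set (List α) × List α) :
    List α × Set (List α) × List α :=
  ((d.1 ++ d'.1).take L,
    d.2.1 ∪ d'.2.1 ∪ {z | z.length = L ∧ z <:+: d.2.2 ++ d'.1},
    rt L (d.2.2 ++ d'.2.2))

lemma phiD_mul (L : ℕ) (a b : FreeSemigroup α) :
    phiD L (a * b) = mD L (phiD L a) (phiD L b) := by
  simp only [phiD, mD, wlist_mul, Prod.mk.injEq]
  refine ⟨take_append_take L _ _, ?_, rt_append_rt L _ _⟩
  ext z
  simp only [Set.mem_union, Set.mem_setOf_eq]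
  constructor
  · rintro ⟨hzl, hzin⟩
    rcases infix_split hzin (le_of_eq hzl) with h | h | h
    exacts [Or.inl (Or.inl ⟨hzl, h⟩), Or.inl (Or.inr ⟨hzl, h⟩), Or.inr ⟨hzl, h⟩]
  · rintro ((⟨hzl, h⟩ | ⟨hzl, h⟩) | ⟨hzl, h⟩)
    · exact ⟨hzl, h.trans (List.prefix_append _ _).isInfix⟩
    · exact ⟨hzl, h.trans (List.suffix_append _ _).isInfix⟩
    · exact ⟨hzl, h.trans
        (suffix_append_prefix_infix (rt_suffix _ _) (List.take_prefix _ _))⟩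

lemma phiD_finite [Finite α] (L : ℕ) :
    (Set.range (phiD (α := α) L)).Finite := by
  apply Set.Finite.subset (Set.Finite.prod (List.finite_length_le α L)
    (Set.Finite.prod ((List.finite_length_eq α L).finite_subsets)
      (List.finite_length_le α L)))
  rintro _ ⟨w, rfl⟩
  refine ⟨?_, ?_, ?_⟩
  · simp [phiD]
  · exact fun z hz => hz.1
  · simp [phiD, length_rt]

end Stmt18

namespace Stmt18

/-- a copy of `Fin N` in `Type 0` carrying no instances -/
def FinCopy (N : ℕ) : Type := Fin N

lemma infix_map_getElem {β : Type*} {f : ℕ → β} {M : ℕ} {z : List β}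
    (h : z <:+: (List.range M).map f) :
    ∃ i, i + z.length ≤ M ∧ ∀ j, (hj : j < z.length) → z[j] = f (i + j) := by
  obtain ⟨s, t, hst⟩ := h
  rw [List.append_assoc] at hst
  have hlen : s.length + (z.length + t.length) = M := by
    have := congrArg List.length hst; simpa using this
  refine ⟨s.length, by omega, fun j hj => ?_⟩
  have h1 : (s ++ (z ++ t))[s.length + j]'(by simp; omega) = f (s.length + j) := by
    rw [List.getElem_of_eq hst]
    simp
  have h2 : (s ++ (z ++ t))[s.length + j]'(by simp; omega) = z[j] := by
    rw [List.getElem_append_right (Nat.le_add_right _ _)]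
    simp only [Nat.add_sub_cancel_left]
    exact List.getElem_append_left hj
  rw [← h2, h1]

end Stmt18

open Stmt18 Topology

/-- Let Γ be a finite alphabet, embedded via ι in the free
profinite semigroup over Γ (a profinite semigroup in which Γ⁺ sits injectively
and densely, with the universal extension property for homomorphisms into
finite semigroups). A right-infinite word u over Γ is recurrent if and only if
some cluster point of its sequence of prefixes is idempotent. -/
theorem stmt_18 {Γ S : Type*} [Fintype Γ] [Semigroup S] [TopologicalSpace S]
    [CompactSpace S] [T2Space S] [TotallyDisconnectedSpace S] [ContinuousMul S]
    (ι : FreeSemigroup Γ →ₙ* S) (hinj : Function.Injective ι)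
    (hdense : DenseRange ι)
    (huniv : ∀ (F : Type) [Semigroup F] [Fintype F] [TopologicalSpace F]
        [DiscreteTopology F] (f : FreeSemigroup Γ →ₙ* F),
        ∃ g : S →ₙ* F, Continuous g ∧ ∀ w, g (ι w) = f w)
    (u : ℕ → Γ) :
    (∀ n : ℕ, ∃ m > n, ∀ k < n, u k = u (m + k)) ↔
      ∃ e : S, e * e = e ∧
        MapClusterPt e Filter.atTop (fun n => ι (pref u n)) := by
  classical
  constructor
  · -- recurrent → some cluster point is idempotent
    intro hrec
    have hGood : ∀ n N0 : ℕ, ∃ a, N0 ≤ a ∧ ∀ k ≤ n, u k = u (a + 1 + k) := by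
      intro n N0
      obtain ⟨m, hm, hocc⟩ := hrec (n + N0 + 1)
      refine ⟨m - 1, by omega, fun k hk => ?_⟩
      have := hocc k (by omega)
      rwa [show m - 1 + 1 + k = m + k by omega]
    have hsplit : ∀ a b : ℕ, (∀ k ≤ b, u k = u (a + 1 + k)) →
        pref u (a + 1 + b) = pref u a * pref u b := by
      intro a b
      induction b with
      | zero =>
        intro h
        have h0 : u 0 = u (a + 1) := h 0 le_rfl
        show pref u (a + 1) = pref u a * pref u 0
        rw [show pref u (a + 1) = pref u a * FreeSemigroup.of (u (a + 1)) from rfl,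
          show pref u 0 = FreeSemigroup.of (u 0) from rfl, h0]
      | succ b ih =>
        intro h
        have hb : u (b + 1) = u (a + 1 + b + 1) := h (b + 1) le_rfl
        calc pref u (a + 1 + (b + 1))
            = pref u (a + 1 + b) * FreeSemigroup.of (u (a + 1 + b + 1)) := rfl
          _ = (pref u a * pref u b) * FreeSemigroup.of (u (a + 1 + b + 1)) := by
              rw [ih (fun k hk => h k (Nat.le_succ_of_le hk))]
          _ = pref u a * (pref u b * FreeSemigroup.of (u (b + 1))) := by
              rw [mul_assoc, ← hb]
          _ = pref u a * pref u (b + 1) := rfl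
    set A : ℕ → Set S := fun n =>
      closure {x | ∃ a, n ≤ a ∧ (∀ k ≤ n, u k = u (a + 1 + k)) ∧ ι (pref u a) = x}
      with hA
    have hA_cl : ∀ n, IsClosed (A n) := fun n => isClosed_closure
    have hA_cpt : ∀ n, IsCompact (A n) := fun n => (hA_cl n).isCompact
    have hA_ne : ∀ n, (A n).Nonempty := by
      intro n
      obtain ⟨a, ha, hg⟩ := hGood n n
      exact ⟨ι (pref u a), subset_closure ⟨a, ha, hg, rfl⟩⟩
    have hA_anti : ∀ n, A (n + 1) ⊆ A n := by
      intro n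
      apply closure_mono
      rintro x ⟨a, h1, h2, h3⟩
      exact ⟨a, by omega, fun k hk => h2 k (by omega), h3⟩
    have hmul : ∀ x ∈ ⋂ n, A n, ∀ y ∈ ⋂ n, A n, x * y ∈ ⋂ n, A n := by
      intro x hx y hy
      rw [Set.mem_iInter] at hx hy
      rw [Set.mem_iInter]
      intro n
      simp only [hA] at hx hy ⊢
      rw [mem_closure_iff_nhds]
      intro t ht
      have hmem : ((fun p : S × S => p.1 * p.2) ⁻¹' t) ∈ 𝓝 (x, y) :=
        (continuous_mul.continuousAt (x := (x, y))) ht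
      rw [nhds_prod_eq] at hmem
      obtain ⟨V, hV, W, hW, hVW⟩ := Filter.mem_prod_iff.mp hmem
      obtain ⟨w1, hw1W, j, hjn, hjg, hjeq⟩ := mem_closure_iff_nhds.mp (hy n) W hW
      obtain ⟨w2, hw2V, a, han, hag, haeq⟩ :=
        mem_closure_iff_nhds.mp (hx (n + j + 1)) V hV
      refine ⟨ι (pref u (a + 1 + j)), ?_, a + 1 + j, by omega, ?_, rfl⟩
      · have hps : pref u (a + 1 + j) = pref u a * pref u j :=
          hsplit a j (fun k hk => hag k (by omega))
        have heq : ι (pref u (a + 1 + j)) = w2 * w1 := by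
          rw [hps, map_mul, haeq, hjeq]
        rw [heq]
        exact hVW (Set.mk_mem_prod hw2V hw1W)
      · intro k hk
        have h2 := hjg k hk
        have h1 := hag (j + 1 + k) (by omega)
        rw [h2, h1, show a + 1 + (j + 1 + k) = a + 1 + j + 1 + k by omega]
    obtain ⟨x0, hx0⟩ :=
      IsCompact.nonempty_iInter_of_sequence_nonempty_isCompact_isClosed A hA_anti
        hA_ne (hA_cpt 0) hA_cl
    obtain ⟨e, heA, hee⟩ := exists_idempotent_in_compact_subsemigroup
      (fun r => continuous_mul_right r) (⋂ n, A n) ⟨x0, hx0⟩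
      ((hA_cpt 0).of_isClosed_subset (isClosed_iInter fun n => hA_cl n)
        (Set.iInter_subset A 0)) hmul
    refine ⟨e, hee, ?_⟩
    rw [mapClusterPt_iff_frequently]
    intro s hs
    rw [Filter.frequently_atTop]
    intro N0
    obtain ⟨w, hws, a, haN, -, haeq⟩ :=
      mem_closure_iff_nhds.mp (Set.mem_iInter.mp heA N0) s hs
    exact ⟨a, haN, by rw [haeq]; exact hws⟩
  · -- idempotent cluster point → recurrent
    rintro ⟨e, hee, hcl⟩ n
    -- the finite semigroup of abstractions at window size 2n+2
    set L : ℕ := 2 * n + 2 with hL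
    set R : Set (List Γ × Set (List Γ) × List Γ) := Set.range (phiD (α := Γ) L)
      with hR
    letI sgR : Semigroup ↥R :=
      { mul := fun x y => ⟨mD L x.1 y.1, by
          obtain ⟨a, ha⟩ := x.2
          obtain ⟨b, hb⟩ := y.2
          exact ⟨a * b, by rw [phiD_mul, ha, hb]⟩⟩
        mul_assoc := by
          rintro ⟨x, a, rfl⟩ ⟨y, b, rfl⟩ ⟨z, c, rfl⟩
          apply Subtype.ext
          show mD L (mD L (phiD L a) (phiD L b)) (phiD L c)
              = mD L (phiD L a) (mD L (phiD L b) (phiD L c))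
          rw [← phiD_mul, ← phiD_mul, ← phiD_mul, ← phiD_mul, mul_assoc] }
    letI ftR : Fintype ↥R := (phiD_finite L).fintype
    set N : ℕ := Fintype.card ↥R with hN
    let e2 : FinCopy N ≃ ↥R := (Fintype.equivFin ↥R).symm
    letI : Semigroup (FinCopy N) :=
      { mul := fun x y => e2.symm (e2 x * e2 y)
        mul_assoc := by
          intro x y z
          show e2.symm (e2 (e2.symm (e2 x * e2 y)) * e2 z)
              = e2.symm (e2 x * e2 (e2.symm (e2 y * e2 z)))
          rw [Equiv.apply_symm_apply, Equiv.apply_symm_apply, mul_assoc] }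
    letI : Fintype (FinCopy N) := Fin.fintype N
    letI : TopologicalSpace (FinCopy N) := ⊥
    haveI : DiscreteTopology (FinCopy N) := ⟨rfl⟩
    let f0 : FreeSemigroup Γ →ₙ* FinCopy N :=
      { toFun := fun w => e2.symm ⟨phiD L w, ⟨w, rfl⟩⟩
        map_mul' := by
          intro a b
          have h1 : (⟨phiD L (a * b), ⟨a * b, rfl⟩⟩ : ↥R)
              = (⟨phiD L a, ⟨a, rfl⟩⟩ : ↥R) * ⟨phiD L b, ⟨b, rfl⟩⟩ :=
            Subtype.ext (phiD_mul L a b)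
          show e2.symm ⟨phiD L (a * b), ⟨a * b, rfl⟩⟩
              = e2.symm (e2 (e2.symm ⟨phiD L a, ⟨a, rfl⟩⟩)
                  * e2 (e2.symm ⟨phiD L b, ⟨b, rfl⟩⟩))
          rw [h1, Equiv.apply_symm_apply, Equiv.apply_symm_apply] }
    obtain ⟨g, hgc, hgeq⟩ := huniv (FinCopy N) f0
    have hU : g ⁻¹' {g e} ∈ 𝓝 e :=
      ((isOpen_discrete {g e}).preimage hgc).mem_nhds rfl
    obtain ⟨m1, hm1n, hm1⟩ :=
      Filter.frequently_atTop.mp ((mapClusterPt_iff_frequently.mp hcl) _ hU) n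
    have hm1' : g (ι (pref u m1)) = g e := hm1
    have hkey : (⟨phiD L (pref u m1 * pref u m1), ⟨pref u m1 * pref u m1, rfl⟩⟩ : ↥R)
        = ⟨phiD L (pref u m1), ⟨pref u m1, rfl⟩⟩ := by
      apply e2.symm.injective
      show f0 (pref u m1 * pref u m1) = f0 (pref u m1)
      have h1 : g (ι (pref u m1)) = f0 (pref u m1) := hgeq _
      calc f0 (pref u m1 * pref u m1)
          = f0 (pref u m1) * f0 (pref u m1) := map_mul f0 _ _
        _ = g e * g e := by rw [← h1, hm1']
        _ = g (e * e) := (map_mul g e e).symm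
        _ = g e := by rw [hee]
        _ = f0 (pref u m1) := by rw [← hm1', h1]
    have hphi : phiD L (pref u m1 * pref u m1) = phiD L (pref u m1) :=
      congrArg Subtype.val hkey
    have hfac : {z : List Γ | z.length = L ∧ z <:+: wlist (pref u m1 * pref u m1)}
        = {z : List Γ | z.length = L ∧ z <:+: wlist (pref u m1)} :=
      congrArg (fun d => d.2.1) hphi
    have hWw : wlist (pref u m1) = (List.range (m1 + 1)).map u := wlist_pref u m1
    have hWlen : (wlist (pref u m1)).length = m1 + 1 := by rw [hWw]; simp
    set z : List Γ := rt (n + 1) (wlist (pref u m1))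
        ++ (wlist (pref u m1)).take (n + 1) with hz
    have hz1 : z.length = L := by
      rw [hz]
      simp only [List.length_append, length_rt, List.length_take, hWlen, hL]
      omega
    have hz2 : z <:+: wlist (pref u m1 * pref u m1) := by
      rw [wlist_mul]
      exact suffix_append_prefix_infix (rt_suffix _ _) (List.take_prefix _ _)
    have hz3 : z <:+: (List.range (m1 + 1)).map u := by
      rw [← hWw]
      have hmem : z ∈ {z : List Γ | z.length = L ∧ z <:+: wlist (pref u m1)} := by
        rw [← hfac]; exact ⟨hz1, hz2⟩
      exact hmem.2
    obtain ⟨i, hiM, hget⟩ := infix_map_getElem hz3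
    refine ⟨i + n + 1, by omega, fun k hk => ?_⟩
    have hjlt : n + 1 + k < z.length := by rw [hz1, hL]; omega
    have h5 : z[n + 1 + k]'hjlt = u (i + (n + 1 + k)) := hget _ hjlt
    have hrtlen : (rt (n + 1) (wlist (pref u m1))).length = n + 1 := by
      rw [length_rt, hWlen]; omega
    have h6 : z[n + 1 + k]'hjlt = u k := by
      rw [List.getElem_of_eq hz, List.getElem_append_right (by rw [hrtlen]; omega)]
      simp only [hrtlen, Nat.add_sub_cancel_left]
      rw [List.getElem_take, List.getElem_of_eq hWw]
      simp
    rw [← h6, h5]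
    congr 1
    omega
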